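/- Let 0 < α < 1, L(t,x,v) a C^2 Lagrangian, and suppose the fractional functional ∫_a^b L(t, x(t), ᶜD^α_{a+}x(t)) dt is invariant under a one-parameter group φ_s acting on x only. Then for every solution x of the fractional Euler–Lagrange equation D^α_{b-}(∂_v L(★)) + ∂_x L(★) = 0 with ★ = (t, x(t), ᶜD^α_{a+}x(t)), the identity ∂_v L(★) · ᶜD^α_{a+}( (d/ds φ_s(x))|_{s=0} )(t) − D^α_{b-}(∂_v L(★))(t) · (d/ds φ_s(x)(t))|_{s=0} = 0 holds for all t ∈ [a,b]. -/

import Mathlib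

open MeasureTheory intervalIntegral

/-- Left Caputo fractional derivative of order `α ∈ (0,1)` of a vector-valued
function. -/
noncomputable def caputoDeriv {F : Type*} [NormedAddCommGroup F] [NormedSpace ℝ F]
    (α a : ℝ) (f : ℝ → F) (t : ℝ) : F :=
  (Real.Gamma (1 - α))⁻¹ • ∫ s in a..t, ((t - s) ^ (-α : ℝ)) • deriv f s

/-- Right Riemann–Liouville fractional derivative of order `α ∈ (0,1)` of a
vector-valued function: `D^α_{b-} f = -(d/dt) I^{1-α}_{b-} f`. -/
noncomputable def rlDerivR {F : Type*} [NormedAddCommGroup F] [NormedSpace ℝ F]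
    (α b : ℝ) (f : ℝ → F) (t : ℝ) : F :=
  -((Real.Gamma (1 - α))⁻¹ •
      deriv (fun u => ∫ s in u..b, ((s - u) ^ (-α : ℝ)) • f s) t)

section Aux

variable {F : Type*} [NormedAddCommGroup F] [NormedSpace ℝ F] [CompleteSpace F]

/-- The singular kernel `σ ↦ (t-σ)^(-α)` is interval integrable. -/
lemma kernel_intble {α : ℝ} (hα1 : α < 1) (t c d : ℝ) :
    IntervalIntegrable (fun σ => (t - σ) ^ (-α : ℝ)) volume c d := by
  have h := intervalIntegrable_rpow' (a := t - d) (b := t - c)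
    (show (-1 : ℝ) < -α by linarith)
  have h2 := h.comp_sub_left t
  simpa using h2.symm

/-- Integral of the singular kernel. -/
lemma kernel_integral {α : ℝ} (hα1 : α < 1) (t c d : ℝ) :
    (∫ σ in c..d, (t - σ) ^ (-α : ℝ)) =
      ((t - c) ^ (1 - α) - (t - d) ^ (1 - α)) / (1 - α) := by
  rw [show (fun σ : ℝ => (t - σ) ^ (-α : ℝ)) = fun σ : ℝ => (t - σ) ^ (-α : ℝ) from rfl,
    intervalIntegral.integral_comp_sub_left (fun u : ℝ => u ^ (-α : ℝ)) t,
    integral_rpow (Or.inl (by linarith : (-1 : ℝ) < -α))]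
  have h : -α + 1 = 1 - α := by ring
  rw [h]

/-- smul of an integrable kernel with a continuous function is integrable. -/
lemma II_smul {k : ℝ → ℝ} {g : ℝ → F} {a b : ℝ}
    (hk : IntervalIntegrable k volume a b) (hg : Continuous g) :
    IntervalIntegrable (fun σ => k σ • g σ) volume a b := by
  obtain ⟨M, hM⟩ := (isCompact_uIcc (a := a) (b := b)).exists_bound_of_continuousOn
    hg.continuousOn
  have hM0 : 0 ≤ M := le_trans (norm_nonneg (g a)) (hM a Set.left_mem_uIcc)
  refine (hk.abs.mul_const M).mono_fun ?_ ?_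
  · exact (hk.def'.aestronglyMeasurable.smul hg.aestronglyMeasurable)
  · filter_upwards [ae_restrict_mem measurableSet_uIoc] with σ hσ
    have h1 : ‖g σ‖ ≤ M := hM σ (Set.uIoc_subset_uIcc hσ)
    have h2 : ‖k σ • g σ‖ = |k σ| * ‖g σ‖ := by
      rw [norm_smul, Real.norm_eq_abs]
    rw [h2, Real.norm_eq_abs, abs_of_nonneg (mul_nonneg (abs_nonneg _) hM0)]
    exact mul_le_mul_of_nonneg_left h1 (abs_nonneg _)

/-- Hölder-type estimate for the fractional integral. -/
lemma caputo_holder {α : ℝ} (hα : 0 < α) (hα1 : α < 1) {g : ℝ → F} (hg : Continuous g)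
    {M a t t' : ℝ} (hM : ∀ σ ∈ Set.Icc a t', ‖g σ‖ ≤ M)
    (hat : a ≤ t) (htt : t ≤ t') :
    ‖(∫ σ in a..t', ((t' - σ) ^ (-α : ℝ)) • g σ) -
        ∫ σ in a..t, ((t - σ) ^ (-α : ℝ)) • g σ‖ ≤
      2 * M * (t' - t) ^ (1 - α) / (1 - α) := by
  have h1α : (0 : ℝ) < 1 - α := by linarith
  have hM0 : 0 ≤ M := le_trans (norm_nonneg (g a)) (hM a ⟨le_rfl, le_trans hat htt⟩)
  have ik : IntervalIntegrable (fun σ => (t - σ) ^ (-α : ℝ)) volume a t :=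
    kernel_intble hα1 t a t
  have ik' : IntervalIntegrable (fun σ => (t' - σ) ^ (-α : ℝ)) volume a t :=
    kernel_intble hα1 t' a t
  have ik'2 : IntervalIntegrable (fun σ => (t' - σ) ^ (-α : ℝ)) volume t t' :=
    kernel_intble hα1 t' t t'
  have ig : IntervalIntegrable (fun σ => ((t - σ) ^ (-α : ℝ)) • g σ) volume a t :=
    II_smul ik hg
  have ig' : IntervalIntegrable (fun σ => ((t' - σ) ^ (-α : ℝ)) • g σ) volume a t :=
    II_smul ik' hg
  have ig'2 : IntervalIntegrable (fun σ => ((t' - σ) ^ (-α : ℝ)) • g σ) volume t t' :=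
    II_smul ik'2 hg
  have hneT : ∀ᵐ σ : ℝ ∂volume, σ ≠ t := by
    rw [ae_iff]
    simpa only [ne_eq, Classical.not_not, Set.setOf_eq_eq_singleton] using
      (measure_singleton (α := ℝ) (μ := volume) t)
  have hdiff : (∫ σ in a..t', ((t' - σ) ^ (-α : ℝ)) • g σ) -
      ∫ σ in a..t, ((t - σ) ^ (-α : ℝ)) • g σ =
      (∫ σ in a..t, (((t' - σ) ^ (-α : ℝ)) - ((t - σ) ^ (-α : ℝ))) • g σ) +
        ∫ σ in t..t', ((t' - σ) ^ (-α : ℝ)) • g σ := by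
    rw [← integral_add_adjacent_intervals ig' ig'2]
    have h : (∫ σ in a..t, (((t' - σ) ^ (-α : ℝ)) - ((t - σ) ^ (-α : ℝ))) • g σ)
        = (∫ σ in a..t, ((t' - σ) ^ (-α : ℝ)) • g σ)
          - ∫ σ in a..t, ((t - σ) ^ (-α : ℝ)) • g σ := by
      rw [← integral_sub ig' ig]
      congr 1; funext σ; rw [sub_smul]
    rw [h]; abel
  rw [hdiff]
  have bound1 : ‖∫ σ in a..t, (((t' - σ) ^ (-α : ℝ)) - ((t - σ) ^ (-α : ℝ))) • g σ‖ ≤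
      M * (t' - t) ^ (1 - α) / (1 - α) := by
    have hb : IntervalIntegrable
        (fun σ => (((t - σ) ^ (-α : ℝ)) - ((t' - σ) ^ (-α : ℝ))) * M) volume a t :=
      (ik.sub ik').mul_const M
    have hle : ∀ᵐ σ ∂(volume.restrict (Set.uIoc a t)),
        ‖(((t' - σ) ^ (-α : ℝ)) - ((t - σ) ^ (-α : ℝ))) • g σ‖ ≤
          (((t - σ) ^ (-α : ℝ)) - ((t' - σ) ^ (-α : ℝ))) * M := by
      filter_upwards [ae_restrict_mem measurableSet_uIoc, ae_restrict_of_ae hneT]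
        with σ hσ hσt
      rw [Set.uIoc_of_le hat] at hσ
      have hσt' : σ < t := lt_of_le_of_ne hσ.2 hσt
      have hk'k : (t' - σ) ^ (-α : ℝ) ≤ (t - σ) ^ (-α : ℝ) :=
        Real.rpow_le_rpow_of_nonpos (by linarith) (by linarith) (by linarith)
      rw [norm_smul, Real.norm_eq_abs,
        abs_of_nonpos (by linarith : ((t' - σ) ^ (-α : ℝ)) - ((t - σ) ^ (-α : ℝ)) ≤ 0)]
      have hgσ : ‖g σ‖ ≤ M := hM σ ⟨hσ.1.le, by linarith⟩
      have h0 : 0 ≤ ((t - σ) ^ (-α : ℝ)) - ((t' - σ) ^ (-α : ℝ)) := by linarith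
      calc -(((t' - σ) ^ (-α : ℝ)) - ((t - σ) ^ (-α : ℝ))) * ‖g σ‖
          = (((t - σ) ^ (-α : ℝ)) - ((t' - σ) ^ (-α : ℝ))) * ‖g σ‖ := by ring
        _ ≤ (((t - σ) ^ (-α : ℝ)) - ((t' - σ) ^ (-α : ℝ))) * M :=
            mul_le_mul_of_nonneg_left hgσ h0
    refine le_trans (norm_integral_le_abs_of_norm_le hle hb) ?_
    have hval : (∫ σ in a..t, (((t - σ) ^ (-α : ℝ)) - ((t' - σ) ^ (-α : ℝ))) * M) =
        (((t - a) ^ (1 - α) + (t' - t) ^ (1 - α) - (t' - a) ^ (1 - α)) / (1 - α)) * M := by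
      rw [intervalIntegral.integral_mul_const, integral_sub ik ik', kernel_integral hα1 t a t,
        kernel_integral hα1 t' a t, sub_self,
        Real.zero_rpow (by linarith : (1 : ℝ) - α ≠ 0)]
      ring
    have hnn : 0 ≤ ∫ σ in a..t, (((t - σ) ^ (-α : ℝ)) - ((t' - σ) ^ (-α : ℝ))) * M := by
      refine integral_nonneg_of_ae_restrict hat ?_
      filter_upwards [ae_restrict_mem measurableSet_Icc, ae_restrict_of_ae hneT]
        with σ hσ hσt
      have hσt' : σ < t := lt_of_le_of_ne hσ.2 hσt
      have hk'k : (t' - σ) ^ (-α : ℝ) ≤ (t - σ) ^ (-α : ℝ) :=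
        Real.rpow_le_rpow_of_nonpos (by linarith) (by linarith) (by linarith)
      exact mul_nonneg (by linarith) hM0
    rw [abs_of_nonneg hnn, hval]
    have hmono : (t - a) ^ (1 - α) ≤ (t' - a) ^ (1 - α) :=
      Real.rpow_le_rpow (by linarith) (by linarith) h1α.le
    rw [div_mul_eq_mul_div, mul_comm M ((t' - t) ^ (1 - α))]
    gcongr <;> linarith
  have bound2 : ‖∫ σ in t..t', ((t' - σ) ^ (-α : ℝ)) • g σ‖ ≤
      M * (t' - t) ^ (1 - α) / (1 - α) := by
    have hb : IntervalIntegrable (fun σ => ((t' - σ) ^ (-α : ℝ)) * M) volume t t' :=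
      ik'2.mul_const M
    have hle : ∀ᵐ σ ∂(volume.restrict (Set.uIoc t t')),
        ‖((t' - σ) ^ (-α : ℝ)) • g σ‖ ≤ ((t' - σ) ^ (-α : ℝ)) * M := by
      filter_upwards [ae_restrict_mem measurableSet_uIoc] with σ hσ
      rw [Set.uIoc_of_le htt] at hσ
      have hker : 0 ≤ (t' - σ) ^ (-α : ℝ) := Real.rpow_nonneg (by linarith [hσ.2]) _
      rw [norm_smul, Real.norm_eq_abs, abs_of_nonneg hker]
      exact mul_le_mul_of_nonneg_left (hM σ ⟨le_trans hat hσ.1.le, hσ.2⟩) hker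
    refine le_trans (norm_integral_le_abs_of_norm_le hle hb) ?_
    have hval : (∫ σ in t..t', ((t' - σ) ^ (-α : ℝ)) * M) =
        ((t' - t) ^ (1 - α) / (1 - α)) * M := by
      rw [intervalIntegral.integral_mul_const, kernel_integral hα1 t' t t', sub_self,
        Real.zero_rpow (by linarith : (1 : ℝ) - α ≠ 0), sub_zero]
    rw [hval, abs_of_nonneg (mul_nonneg (div_nonneg (Real.rpow_nonneg (by linarith) _)
      h1α.le) hM0)]
    rw [div_mul_eq_mul_div, mul_comm ((t' - t) ^ (1 - α)) M]
  calc ‖(∫ σ in a..t, (((t' - σ) ^ (-α : ℝ)) - ((t - σ) ^ (-α : ℝ))) • g σ) +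
        ∫ σ in t..t', ((t' - σ) ^ (-α : ℝ)) • g σ‖
      ≤ ‖∫ σ in a..t, (((t' - σ) ^ (-α : ℝ)) - ((t - σ) ^ (-α : ℝ))) • g σ‖ +
        ‖∫ σ in t..t', ((t' - σ) ^ (-α : ℝ)) • g σ‖ := norm_add_le _ _
    _ ≤ M * (t' - t) ^ (1 - α) / (1 - α) + M * (t' - t) ^ (1 - α) / (1 - α) :=
        add_le_add bound1 bound2
    _ = 2 * M * (t' - t) ^ (1 - α) / (1 - α) := by ring

/-- Continuity of the fractional integral of a continuous function. -/
lemma caputo_int_continuousOn {α a b : ℝ} (hα : 0 < α) (hα1 : α < 1) (hab : a ≤ b)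
    {g : ℝ → F} (hg : Continuous g) :
    ContinuousOn (fun t => ∫ σ in a..t, ((t - σ) ^ (-α : ℝ)) • g σ) (Set.Icc a b) := by
  obtain ⟨M, hM⟩ := (isCompact_Icc (a := a) (b := b)).exists_bound_of_continuousOn
    hg.continuousOn
  have hM0 : 0 ≤ M := le_trans (norm_nonneg (g a)) (hM a ⟨le_rfl, hab⟩)
  have h1α : (0 : ℝ) < 1 - α := by linarith
  intro t₀ ht₀
  rw [Metric.continuousWithinAt_iff]
  intro ε hε
  have hquot : 0 < ε * (1 - α) / (2 * M + 1) := by positivity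
  refine ⟨(ε * (1 - α) / (2 * M + 1)) ^ (1 - α)⁻¹,
    Real.rpow_pos_of_pos hquot _, ?_⟩
  intro t ht hdist
  have hδp : ((ε * (1 - α) / (2 * M + 1)) ^ (1 - α)⁻¹) ^ (1 - α) =
      ε * (1 - α) / (2 * M + 1) :=
    Real.rpow_inv_rpow hquot.le (by linarith)
  have key : ∀ u v : ℝ, a ≤ u → u ≤ v → v ≤ b →
      v - u ≤ (ε * (1 - α) / (2 * M + 1)) ^ (1 - α)⁻¹ →
      ‖(∫ σ in a..v, ((v - σ) ^ (-α : ℝ)) • g σ) -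
        ∫ σ in a..u, ((u - σ) ^ (-α : ℝ)) • g σ‖ < ε := by
    intro u v hau huv hvb hvu
    have hMuv : ∀ σ ∈ Set.Icc a v, ‖g σ‖ ≤ M := fun σ hσ =>
      hM σ ⟨hσ.1, le_trans hσ.2 hvb⟩
    refine lt_of_le_of_lt (caputo_holder hα hα1 hg hMuv hau huv) ?_
    have h2 : (v - u) ^ (1 - α) ≤
        ((ε * (1 - α) / (2 * M + 1)) ^ (1 - α)⁻¹) ^ (1 - α) :=
      Real.rpow_le_rpow (by linarith) hvu h1α.le
    rw [hδp] at h2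
    have h3 : 2 * M * (v - u) ^ (1 - α) / (1 - α) ≤
        2 * M * (ε * (1 - α) / (2 * M + 1)) / (1 - α) := by gcongr
    refine lt_of_le_of_lt h3 ?_
    rw [div_lt_iff₀ h1α]
    have hM1 : (0:ℝ) < 2 * M + 1 := by linarith
    rw [show 2 * M * (ε * (1 - α) / (2 * M + 1)) =
      (2 * M / (2 * M + 1)) * (ε * (1 - α)) by field_simp <;> ring]
    have hfrac : 2 * M / (2 * M + 1) < 1 := by
      rw [div_lt_one hM1]; linarith
    nlinarith [mul_pos hε h1α]
  rcases le_total t t₀ with hle | hle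
  · rw [dist_comm, dist_eq_norm]
    refine key t t₀ ht.1 hle ht₀.2 ?_
    rw [Real.dist_eq] at hdist
    have := abs_sub_comm t t₀ ▸ hdist
    have h4 : t₀ - t ≤ |t₀ - t| := le_abs_self _
    linarith [this, h4]
  · rw [dist_eq_norm]
    refine key t₀ t ht₀.1 hle ht.2 ?_
    rw [Real.dist_eq] at hdist
    have h4 : t - t₀ ≤ |t - t₀| := le_abs_self _
    linarith [hdist, h4]

/-- Continuity of the Caputo derivative of a `C¹` function. -/
lemma caputo_continuousOn {α a b : ℝ} (hα : 0 < α) (hα1 : α < 1) (hab : a ≤ b)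
    {f : ℝ → F} (hf : ContDiff ℝ 1 f) :
    ContinuousOn (caputoDeriv α a f) (Set.Icc a b) := by
  have h := (caputo_int_continuousOn (α := α) (a := a) (b := b) hα hα1 hab
    (hf.continuous_deriv le_rfl)).const_smul (Real.Gamma (1 - α))⁻¹
  exact h

/-- Localization: a continuous function with vanishing integrals is nonpositive. -/
lemma loc_nonpos {a b : ℝ} (hab : a < b) {q : ℝ → ℝ} (hq : ContinuousOn q (Set.Icc a b))
    (h0 : ∀ ta ∈ Set.Icc a b, ∀ tb ∈ Set.Icc a b, (∫ τ in ta..tb, q τ) = 0) :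
    ∀ t ∈ Set.Icc a b, q t ≤ 0 := by
  intro t ht
  by_contra hpos
  push_neg at hpos
  have hctw := hq t ht
  rw [Metric.continuousWithinAt_iff] at hctw
  obtain ⟨δ, hδ, hball⟩ := hctw (q t / 2) (by linarith)
  set c := max a (t - δ / 2) with hcdef
  set d := min b (t + δ / 2) with hddef
  have hcd : c < d := by
    apply max_lt
    · exact lt_min hab (by linarith [ht.1])
    · exact lt_min (by linarith [ht.2]) (by linarith)
  have hc : c ∈ Set.Icc a b := ⟨le_max_left _ _, max_le hab.le (by linarith [ht.2])⟩
  have hd : d ∈ Set.Icc a b := ⟨le_min (by linarith [ht.1]) (by linarith [ht.1]),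
    min_le_left _ _⟩
  have hsub : Set.Icc c d ⊆ Set.Icc a b := Set.Icc_subset_Icc hc.1 hd.2
  have hlow : ∀ τ ∈ Set.Icc c d, q t / 2 ≤ q τ := by
    intro τ hτ
    have hτI : τ ∈ Set.Icc a b := hsub hτ
    have hcτ : t - δ / 2 ≤ τ := le_trans (le_max_right _ _) hτ.1
    have hτd : τ ≤ t + δ / 2 := le_trans hτ.2 (min_le_right _ _)
    have hdist : dist τ t < δ := by
      rw [Real.dist_eq, abs_lt]
      constructor <;> linarith
    have := hball hτI hdist
    rw [Real.dist_eq, abs_lt] at this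
    linarith [this.1]
  have hint : (∫ τ in c..d, q τ) = 0 := h0 c hc d hd
  have hiq : IntervalIntegrable q volume c d := by
    apply ContinuousOn.intervalIntegrable
    rw [Set.uIcc_of_le hcd.le]
    exact hq.mono hsub
  have hmono : (d - c) * q t / 2 ≤ ∫ τ in c..d, q τ := by
    have h1 : (∫ _ in c..d, q t / 2) ≤ ∫ τ in c..d, q τ :=
      intervalIntegral.integral_mono_on hcd.le intervalIntegrable_const hiq hlow
    simpa [intervalIntegral.integral_const, smul_eq_mul] using h1
  rw [hint] at hmono
  nlinarith [hcd, hpos]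

/-- Localization: if two continuous functions have equal integrals over all
subintervals of `[a,b]`, they agree on `[a,b]`. -/
lemma loc_eq {a b : ℝ} (hab : a < b) {f g : ℝ → ℝ}
    (hf : ContinuousOn f (Set.Icc a b)) (hg : ContinuousOn g (Set.Icc a b))
    (h : ∀ ta ∈ Set.Icc a b, ∀ tb ∈ Set.Icc a b,
      (∫ τ in ta..tb, f τ) = ∫ τ in ta..tb, g τ) :
    ∀ t ∈ Set.Icc a b, f t = g t := by
  have h0 : ∀ ta ∈ Set.Icc a b, ∀ tb ∈ Set.Icc a b,
      (∫ τ in ta..tb, f τ - g τ) = 0 := by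
    intro ta hta tb htb
    have hsub : Set.uIcc ta tb ⊆ Set.Icc a b := Set.uIcc_subset_Icc hta htb
    rw [intervalIntegral.integral_sub ((hf.mono hsub).intervalIntegrable)
      ((hg.mono hsub).intervalIntegrable), h ta hta tb htb, sub_self]
  intro t ht
  have h1 := loc_nonpos hab (hf.sub hg) h0 t ht
  have h2 := loc_nonpos hab ((hf.sub hg).neg)
    (fun ta hta tb htb => by
      simp only [Pi.neg_apply, Pi.sub_apply]; rw [intervalIntegral.integral_neg, h0 ta hta tb htb, neg_zero]) t ht
  simp only [Pi.neg_apply, neg_nonpos, Pi.sub_apply] at h2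
  have : f t - g t = 0 := le_antisymm h1 (by linarith [h2])
  linarith [this]

/-- Differentiation of the Caputo derivative with respect to the group
parameter. -/
lemma caputo_param_hasDerivAt {E : Type*} [NormedAddCommGroup E] [NormedSpace ℝ E]
    [CompleteSpace E] {α a : ℝ} (hα : 0 < α) (hα1 : α < 1)
    (Φ : ℝ × E → E) (hΦ : ContDiff ℝ 2 Φ) {x : ℝ → E} (hx : ContDiff ℝ 1 x)
    (t : ℝ) (hat : a ≤ t) :
    HasDerivAt (fun s => caputoDeriv α a (fun τ => Φ (s, x τ)) t)
      (caputoDeriv α a (fun τ => deriv (fun s => Φ (s, x τ)) 0) t) 0 := by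
  have hΨ : ContDiff ℝ 1 (fderiv ℝ Φ) := hΦ.fderiv_right (m := 1) (by norm_num)
  have hΨc : Continuous (fderiv ℝ Φ) := hΨ.continuous
  have hDΨc : Continuous (fderiv ℝ (fderiv ℝ Φ)) := hΨ.continuous_fderiv one_ne_zero
  have hdxc : Continuous (deriv x) := hx.continuous_deriv le_rfl
  have hxD : ∀ σ, HasDerivAt x (deriv x σ) σ := fun σ =>
    (hx.differentiable one_ne_zero σ).hasDerivAt
  set w : ℝ → ℝ → E := fun s σ => (fderiv ℝ Φ (s, x σ)) (0, deriv x σ) with hwdef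
  set w' : ℝ → ℝ → E :=
    fun s σ => ((fderiv ℝ (fderiv ℝ Φ) (s, x σ)) (1, 0)) (0, deriv x σ) with hw'def
  have hΦD : ∀ p, HasFDerivAt Φ (fderiv ℝ Φ p) p := fun p =>
    (hΦ.differentiable two_ne_zero p).hasFDerivAt
  have hΨD : ∀ p, HasFDerivAt (fderiv ℝ Φ) (fderiv ℝ (fderiv ℝ Φ) p) p := fun p =>
    (hΨ.differentiable one_ne_zero p).hasFDerivAt
  have F1 : ∀ s σ, HasDerivAt (fun τ => Φ (s, x τ)) (w s σ) σ := by
    intro s σ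
    have h1 : HasDerivAt (fun τ : ℝ => ((s : ℝ), x τ)) ((0 : ℝ), deriv x σ) σ :=
      (hasDerivAt_const σ s).prodMk (hxD σ)
    exact (hΦD (s, x σ)).comp_hasDerivAt σ h1
  have F2 : ∀ s σ, deriv (fun τ => Φ (s, x τ)) σ = w s σ := fun s σ => (F1 s σ).deriv
  have F3 : ∀ s σ, HasDerivAt (fun s => w s σ) (w' s σ) s := by
    intro s σ
    have h1 : HasDerivAt (fun s : ℝ => (s, x σ)) ((1 : ℝ), (0 : E)) s :=
      (hasDerivAt_id s).prodMk (hasDerivAt_const s (x σ))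
    have h3 : HasDerivAt (fun s => fderiv ℝ Φ (s, x σ))
        ((fderiv ℝ (fderiv ℝ Φ) (s, x σ)) (1, 0)) s :=
      (hΨD (s, x σ)).comp_hasDerivAt s h1
    have h4 := h3.clm_apply (hasDerivAt_const s ((0 : ℝ), deriv x σ))
    simpa using h4
  have hwc : Continuous fun p : ℝ × ℝ => w p.1 p.2 := by
    have h1 : Continuous fun p : ℝ × ℝ => fderiv ℝ Φ (p.1, x p.2) :=
      hΨc.comp (continuous_fst.prodMk (hx.continuous.comp continuous_snd))
    exact h1.clm_apply (continuous_const.prodMk (hdxc.comp continuous_snd))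
  have hw'c : Continuous fun p : ℝ × ℝ => w' p.1 p.2 := by
    have h1 : Continuous fun p : ℝ × ℝ => fderiv ℝ (fderiv ℝ Φ) (p.1, x p.2) :=
      hDΨc.comp (continuous_fst.prodMk (hx.continuous.comp continuous_snd))
    exact (h1.clm_apply continuous_const).clm_apply
      (continuous_const.prodMk (hdxc.comp continuous_snd))
  have F6 : ∀ τ, HasDerivAt (fun s => Φ (s, x τ)) ((fderiv ℝ Φ (0, x τ)) (1, 0)) 0 := by
    intro τ
    have h1 : HasDerivAt (fun s : ℝ => (s, x τ)) ((1 : ℝ), (0 : E)) 0 :=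
      (hasDerivAt_id 0).prodMk (hasDerivAt_const 0 (x τ))
    exact (hΦD (0, x τ)).comp_hasDerivAt 0 h1
  have hξ : (fun τ => deriv (fun s => Φ (s, x τ)) 0) =
      fun τ => (fderiv ℝ Φ (0, x τ)) (1, 0) := funext fun τ => (F6 τ).deriv
  have F7 : ∀ σ, deriv (fun τ => deriv (fun s => Φ (s, x τ)) 0) σ = w' 0 σ := by
    intro σ
    rw [hξ]
    have h3 : HasDerivAt (fun τ => fderiv ℝ Φ (0, x τ))
        ((fderiv ℝ (fderiv ℝ Φ) (0, x σ)) (0, deriv x σ)) σ :=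
      (hΨD (0, x σ)).comp_hasDerivAt σ ((hasDerivAt_const σ (0 : ℝ)).prodMk (hxD σ))
    have h4 := h3.clm_apply (hasDerivAt_const σ ((1 : ℝ), (0 : E)))
    have h5 : deriv (fun τ => (fderiv ℝ Φ (0, x τ)) (1, 0)) σ =
        ((fderiv ℝ (fderiv ℝ Φ) (0, x σ)) (0, deriv x σ)) (1, 0) := by
      simpa using h4.deriv
    rw [h5]
    exact (hΦ.contDiffAt (x := ((0 : ℝ), x σ))).isSymmSndFDerivAt (by simp)
      (0, deriv x σ) (1, 0)
  -- dominated differentiation under the integral sign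
  obtain ⟨C, hC⟩ := ((isCompact_Icc (a := (-1 : ℝ)) (b := 1)).prod
    (isCompact_uIcc (a := a) (b := t))).exists_bound_of_continuousOn hw'c.continuousOn
  have hkermeas : Measurable fun σ : ℝ => (t - σ) ^ (-α : ℝ) :=
    (measurable_const.sub measurable_id).pow measurable_const
  have main := intervalIntegral.hasDerivAt_integral_of_dominated_loc_of_deriv_le
    (μ := volume) (a := a) (b := t) (x₀ := (0 : ℝ)) (s := Metric.ball 0 1)
    (F := fun s σ => ((t - σ) ^ (-α : ℝ)) • w s σ)
    (F' := fun s σ => ((t - σ) ^ (-α : ℝ)) • w' s σ)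
    (bound := fun σ => |(t - σ) ^ (-α : ℝ)| * C)
    (Metric.ball_mem_nhds 0 one_pos)
    (Filter.Eventually.of_forall fun s =>
      hkermeas.aestronglyMeasurable.smul
        ((hwc.comp (Continuous.prodMk_right s)).aestronglyMeasurable))
    (II_smul (kernel_intble hα1 t a t) (hwc.comp (Continuous.prodMk_right 0)))
    (hkermeas.aestronglyMeasurable.smul
      ((hw'c.comp (Continuous.prodMk_right 0)).aestronglyMeasurable))
    (Filter.Eventually.of_forall fun σ hσ s hs => by
      rw [norm_smul, Real.norm_eq_abs]
      refine mul_le_mul_of_nonneg_left ?_ (abs_nonneg _)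
      refine hC (s, σ) ⟨?_, Set.uIoc_subset_uIcc hσ⟩
      have : |s| < 1 := by simpa [Real.dist_eq] using Metric.mem_ball.mp hs
      rw [abs_lt] at this
      exact ⟨this.1.le, this.2.le⟩)
    ((kernel_intble hα1 t a t).abs.mul_const C)
    (Filter.Eventually.of_forall fun σ _ s _ => (F3 s σ).const_smul ((t - σ) ^ (-α : ℝ)))
  have hmain2 := main.2.const_smul (Real.Gamma (1 - α))⁻¹
  have e1 : (fun s => (Real.Gamma (1 - α))⁻¹ •
      ∫ σ in a..t, ((t - σ) ^ (-α : ℝ)) • w s σ) =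
      fun s => caputoDeriv α a (fun τ => Φ (s, x τ)) t := by
    funext s
    simp only [caputoDeriv]
    congr 1
    refine intervalIntegral.integral_congr fun σ _ => ?_
    rw [F2]
  have e2 : (Real.Gamma (1 - α))⁻¹ • (∫ σ in a..t, ((t - σ) ^ (-α : ℝ)) • w' 0 σ) =
      caputoDeriv α a (fun τ => deriv (fun s => Φ (s, x τ)) 0) t := by
    simp only [caputoDeriv]
    congr 1
    refine intervalIntegral.integral_congr fun σ _ => ?_
    rw [F7]
  rw [← e1, ← e2]
  exact hmain2

end Aux

/-- fractional Noether theorem, no time transformation: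
if the fractional functional is invariant under a one-parameter group acting
on `x` only, then along every solution of the fractional Euler–Lagrange
equation `D^α_{b-}(∂_v L(★)) + ∂_x L(★) = 0` one has
`∂_v L(★)·ᶜD^α_{a+}( dφ_s(x)/ds|₀ ) − D^α_{b-}(∂_v L(★))·(dφ_s(x)/ds|₀) = 0`. -/
theorem fractional_noether_no_time_change
    {E : Type*} [NormedAddCommGroup E] [NormedSpace ℝ E] [CompleteSpace E]
    (α a b : ℝ) (hα : 0 < α) (hα1 : α < 1) (hab : a < b)
    (L : ℝ → E → E → ℝ)
    (hL : ContDiff ℝ 2 (fun p : ℝ × E × E => L p.1 p.2.1 p.2.2))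
    (φ : ℝ → E → E)
    (hφ : ContDiff ℝ 2 (fun p : ℝ × E => φ p.1 p.2))
    (hφ0 : ∀ y : E, φ 0 y = y)
    (hφgroup : ∀ s s' : ℝ, ∀ y : E, φ (s + s') y = φ s (φ s' y))
    (x : ℝ → E) (hx : ContDiff ℝ 1 x)
    (hinv : ∀ s : ℝ, ∀ ta ∈ Set.Icc a b, ∀ tb ∈ Set.Icc a b,
      (∫ t in ta..tb, L t (x t) (caputoDeriv α a x t)) =
        ∫ t in ta..tb, L t (φ s (x t))
          (caputoDeriv α a (fun τ => φ s (x τ)) t))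
    (hEL : ∀ t ∈ Set.Icc a b,
      rlDerivR α b (fun τ => fderiv ℝ (fun v => L τ (x τ) v)
          (caputoDeriv α a x τ)) t +
        fderiv ℝ (fun y => L t y (caputoDeriv α a x t)) (x t) = 0) :
    ∀ t ∈ Set.Icc a b,
      (fderiv ℝ (fun v => L t (x t) v) (caputoDeriv α a x t))
          (caputoDeriv α a (fun τ => deriv (fun s => φ s (x τ)) 0) t) -
        (rlDerivR α b (fun τ => fderiv ℝ (fun v => L τ (x τ) v)
            (caputoDeriv α a x τ)) t)
          (deriv (fun s => φ s (x t)) 0) = 0 := by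
  intro t ht
  -- Step 1: pointwise invariance via localization
  have hcapx : ContinuousOn (caputoDeriv α a x) (Set.Icc a b) :=
    caputo_continuousOn hα hα1 hab.le hx
  have hfc : ContinuousOn (fun τ => L τ (x τ) (caputoDeriv α a x τ)) (Set.Icc a b) := by
    have hcurve : ContinuousOn
        (fun τ => ((τ, (x τ, caputoDeriv α a x τ)) : ℝ × E × E)) (Set.Icc a b) :=
      continuousOn_id.prodMk ((hx.continuous.continuousOn).prodMk hcapx)
    exact hL.continuous.comp_continuousOn hcurve
  have hgc : ∀ s : ℝ, ContinuousOn
      (fun τ => L τ (φ s (x τ)) (caputoDeriv α a (fun τ' => φ s (x τ')) τ))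
      (Set.Icc a b) := by
    intro s
    have hxs : ContDiff ℝ 1 fun τ => φ s (x τ) :=
      (hφ.of_le one_le_two).comp ((contDiff_const (c := s)).prodMk hx)
    have hcap : ContinuousOn (caputoDeriv α a fun τ => φ s (x τ)) (Set.Icc a b) :=
      caputo_continuousOn hα hα1 hab.le hxs
    have hcurve : ContinuousOn
        (fun τ => ((τ, (φ s (x τ), caputoDeriv α a (fun τ' => φ s (x τ')) τ)) : ℝ × E × E))
        (Set.Icc a b) :=
      continuousOn_id.prodMk ((hxs.continuous.continuousOn).prodMk hcap)
    exact hL.continuous.comp_continuousOn hcurve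
  have hpt : ∀ s : ℝ, ∀ u ∈ Set.Icc a b,
      L u (x u) (caputoDeriv α a x u) =
        L u (φ s (x u)) (caputoDeriv α a (fun τ => φ s (x τ)) u) :=
    fun s => loc_eq hab hfc (hgc s) (hinv s)
  -- Step 2: derivative of the perturbed functional integrand at the point t
  have hkey : HasDerivAt (fun s => caputoDeriv α a (fun τ => φ s (x τ)) t)
      (caputoDeriv α a (fun τ => deriv (fun s => φ s (x τ)) 0) t) 0 :=
    caputo_param_hasDerivAt hα hα1 (fun p : ℝ × E => φ p.1 p.2) hφ hx t ht.1
  have hφt : HasDerivAt (fun s => φ s (x t))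
      ((fderiv ℝ (fun p : ℝ × E => φ p.1 p.2) (0, x t)) (1, 0)) 0 :=
    by have h := ((hφ.differentiable two_ne_zero (0, x t)).hasFDerivAt).comp_hasDerivAt (0 : ℝ)
          ((hasDerivAt_id (0 : ℝ)).prodMk (hasDerivAt_const 0 (x t))); exact h
  have hξteq : deriv (fun s => φ s (x t)) 0 =
      (fderiv ℝ (fun p : ℝ × E => φ p.1 p.2) (0, x t)) (1, 0) := hφt.deriv
  have hLd : HasFDerivAt (fun p : ℝ × E × E => L p.1 p.2.1 p.2.2)
      (fderiv ℝ (fun p : ℝ × E × E => L p.1 p.2.1 p.2.2)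
        ((t, (x t, caputoDeriv α a x t)) : ℝ × E × E))
      ((t, (x t, caputoDeriv α a x t)) : ℝ × E × E) :=
    (hL.differentiable two_ne_zero _).hasFDerivAt
  have hcurve : HasDerivAt
      (fun s => ((t, (φ s (x t), caputoDeriv α a (fun τ => φ s (x τ)) t)) : ℝ × E × E))
      (((0 : ℝ), ((fderiv ℝ (fun p : ℝ × E => φ p.1 p.2) (0, x t)) (1, 0),
        caputoDeriv α a (fun τ => deriv (fun s => φ s (x τ)) 0) t)) : ℝ × E × E) 0 :=
    (hasDerivAt_const 0 t).prodMk (hφt.prodMk hkey)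
  have hpoint : ((t, (φ 0 (x t), caputoDeriv α a (fun τ => φ 0 (x τ)) t)) : ℝ × E × E) =
      ((t, (x t, caputoDeriv α a x t)) : ℝ × E × E) := by
    simp only [hφ0]
  have hLd' : HasFDerivAt (fun p : ℝ × E × E => L p.1 p.2.1 p.2.2)
      (fderiv ℝ (fun p : ℝ × E × E => L p.1 p.2.1 p.2.2)
        ((t, (x t, caputoDeriv α a x t)) : ℝ × E × E))
      ((t, (φ 0 (x t), caputoDeriv α a (fun τ => φ 0 (x τ)) t)) : ℝ × E × E) := by
    rw [hpoint]; exact hLd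
  have hG : HasDerivAt
      (fun s => L t (φ s (x t)) (caputoDeriv α a (fun τ => φ s (x τ)) t))
      ((fderiv ℝ (fun p : ℝ × E × E => L p.1 p.2.1 p.2.2)
        ((t, (x t, caputoDeriv α a x t)) : ℝ × E × E))
        ((0 : ℝ), ((fderiv ℝ (fun p : ℝ × E => φ p.1 p.2) (0, x t)) (1, 0),
          caputoDeriv α a (fun τ => deriv (fun s => φ s (x τ)) 0) t))) 0 :=
    by have h := hLd'.comp_hasDerivAt 0 hcurve; exact h
  -- Step 3: the perturbed integrand is constant in s
  have hGconst : (fun s => L t (φ s (x t)) (caputoDeriv α a (fun τ => φ s (x τ)) t)) =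
      fun _ : ℝ => L t (x t) (caputoDeriv α a x t) :=
    funext fun s => (hpt s t ht).symm
  have hzero : (fderiv ℝ (fun p : ℝ × E × E => L p.1 p.2.1 p.2.2)
      ((t, (x t, caputoDeriv α a x t)) : ℝ × E × E))
      ((0 : ℝ), ((fderiv ℝ (fun p : ℝ × E => φ p.1 p.2) (0, x t)) (1, 0),
        caputoDeriv α a (fun τ => deriv (fun s => φ s (x τ)) 0) t)) = 0 := by
    have hG' : HasDerivAt (fun _ : ℝ => L t (x t) (caputoDeriv α a x t))
        ((fderiv ℝ (fun p : ℝ × E × E => L p.1 p.2.1 p.2.2)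
          ((t, (x t, caputoDeriv α a x t)) : ℝ × E × E))
          ((0 : ℝ), ((fderiv ℝ (fun p : ℝ × E => φ p.1 p.2) (0, x t)) (1, 0),
            caputoDeriv α a (fun τ => deriv (fun s => φ s (x τ)) 0) t))) 0 := by
      rw [← hGconst]; exact hG
    exact hG'.unique (hasDerivAt_const 0 _)
  -- Step 4: express partial derivatives of L via the full derivative
  have hjv : HasFDerivAt (fun v : E => ((t, (x t, v)) : ℝ × E × E))
      ((0 : E →L[ℝ] ℝ).prod ((0 : E →L[ℝ] E).prod (ContinuousLinearMap.id ℝ E)))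
      (caputoDeriv α a x t) :=
    (hasFDerivAt_const t _).prodMk ((hasFDerivAt_const (x t) _).prodMk (hasFDerivAt_id _))
  have hv : HasFDerivAt (fun v : E => L t (x t) v)
      ((fderiv ℝ (fun p : ℝ × E × E => L p.1 p.2.1 p.2.2)
        ((t, (x t, caputoDeriv α a x t)) : ℝ × E × E)).comp
        ((0 : E →L[ℝ] ℝ).prod ((0 : E →L[ℝ] E).prod (ContinuousLinearMap.id ℝ E))))
      (caputoDeriv α a x t) := by have h := HasFDerivAt.comp (caputoDeriv α a x t) hLd hjv; exact h
  have hjx : HasFDerivAt (fun y : E => ((t, (y, caputoDeriv α a x t)) : ℝ × E × E))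
      ((0 : E →L[ℝ] ℝ).prod ((ContinuousLinearMap.id ℝ E).prod (0 : E →L[ℝ] E)))
      (x t) :=
    (hasFDerivAt_const t _).prodMk ((hasFDerivAt_id _).prodMk (hasFDerivAt_const _ _))
  have hxp : HasFDerivAt (fun y : E => L t y (caputoDeriv α a x t))
      ((fderiv ℝ (fun p : ℝ × E × E => L p.1 p.2.1 p.2.2)
        ((t, (x t, caputoDeriv α a x t)) : ℝ × E × E)).comp
        ((0 : E →L[ℝ] ℝ).prod ((ContinuousLinearMap.id ℝ E).prod (0 : E →L[ℝ] E))))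
      (x t) := by have h := HasFDerivAt.comp (x t) hLd hjx; exact h
  -- Step 5: use the Euler–Lagrange equation and conclude
  have hrl : rlDerivR α b (fun τ => fderiv ℝ (fun v => L τ (x τ) v)
      (caputoDeriv α a x τ)) t =
      -(fderiv ℝ (fun y => L t y (caputoDeriv α a x t)) (x t)) :=
    eq_neg_of_add_eq_zero_left (hEL t ht)
  rw [hrl, hξteq, hv.fderiv, hxp.fderiv]
  simp only [ContinuousLinearMap.coe_comp', Function.comp_apply,
    ContinuousLinearMap.prod_apply, ContinuousLinearMap.zero_apply,
    ContinuousLinearMap.coe_id', id_eq, ContinuousLinearMap.neg_apply, sub_neg_eq_add]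
  have hsplit : (((0 : ℝ), ((fderiv ℝ (fun p : ℝ × E => φ p.1 p.2) (0, x t)) (1, 0),
      caputoDeriv α a (fun τ => deriv (fun s => φ s (x τ)) 0) t)) : ℝ × E × E) =
      (((0 : ℝ), ((0 : E),
        caputoDeriv α a (fun τ => deriv (fun s => φ s (x τ)) 0) t)) : ℝ × E × E) +
      (((0 : ℝ), ((fderiv ℝ (fun p : ℝ × E => φ p.1 p.2) (0, x t)) (1, 0),
        (0 : E))) : ℝ × E × E) := by
    simp [Prod.ext_iff]
  rw [hsplit, map_add] at hzero
  linarith [hzero]
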